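/- Let $u, v : \mathbb{R} \to [0,\infty)$ be measurable with $\int_{-\infty}^0 u, \int_{-\infty}^0 v < \infty$, and suppose for some $\ell \geq 0$ that $\int_{-\infty}^r v(x)\,dx \leq \int_{-\infty}^r u(x)\,dx + \ell$ for all $r \in \mathbb{R}$. Then for any $\delta > 0$, the heat semigroup preserves this relation: $\int_{-\infty}^r \mathcal{S}_\delta v(x)\,dx \leq \int_{-\infty}^r \mathcal{S}_\delta u(x)\,dx + \ell$ for all $r \in \mathbb{R}$, where $\mathcal{S}_\delta f(x) = \int_{\mathbb{R}} \mathfrak{p}_\delta(y-x) f(y)\,dy$ and $\mathfrak{p}_\delta$ is the Gaussian density with mean $0$ and variance $\delta$. -/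

import Mathlib

open MeasureTheory Set Real
open scoped ENNReal NNReal

/-- The Gaussian heat kernel with variance `t`. -/
noncomputable def heatKernel (t z : ℝ) : ℝ :=
  (Real.sqrt (2 * Real.pi * t))⁻¹ * Real.exp (-z ^ 2 / (2 * t))

/-- Cumulative integral `∫_{-∞}^a v`. -/
noncomputable def cum (v : ℝ → ℝ≥0∞) (a : ℝ) : ℝ≥0∞ :=
  ∫⁻ x in Set.Iic a, v x

/-- Heat semigroup applied to a nonnegative function. -/
noncomputable def heatSemigroup (δ : ℝ) (f : ℝ → ℝ) (x : ℝ) : ℝ≥0∞ :=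
  ∫⁻ y, ENNReal.ofReal (heatKernel δ (y - x)) * ENNReal.ofReal (f y)

lemma heatKernel_eq_gaussian (δ : ℝ) (hδ : 0 < δ) (z : ℝ) :
    heatKernel δ z = ProbabilityTheory.gaussianPDFReal 0 δ.toNNReal z := by
  simp [heatKernel, ProbabilityTheory.gaussianPDFReal, Real.coe_toNNReal _ hδ.le]

lemma lintegral_heatKernel (δ : ℝ) (hδ : 0 < δ) :
    ∫⁻ z, ENNReal.ofReal (heatKernel δ z) = 1 := by
  simp_rw [heatKernel_eq_gaussian δ hδ]
  exact ProbabilityTheory.lintegral_gaussianPDFReal_eq_one 0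
    (by simp [Real.toNNReal_eq_zero, hδ, not_le.mpr hδ])

lemma measurable_heatKernel (δ : ℝ) : Measurable (heatKernel δ) :=
  ((((measurable_id.pow_const 2).neg).div_const _).exp).const_mul _

lemma cum_shift (f : ℝ → ℝ≥0∞) (r z : ℝ) :
    ∫⁻ x in Set.Iic r, f (x + z) = cum f (r + z) := by
  have h := (measurePreserving_add_right (volume : Measure ℝ) z).setLIntegral_comp_preimage_emb
    (MeasurableEquiv.addRight z).measurableEmbedding f (Set.Iic (r + z))
  have hpre : (fun x : ℝ => x + z) ⁻¹' Set.Iic (r + z) = Set.Iic r := by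
    ext x; simp
  rw [cum, ← h, hpre]

lemma cum_heatSemigroup (δ : ℝ) (hδ : 0 < δ) (f : ℝ → ℝ) (hf : Measurable f) (r : ℝ) :
    cum (heatSemigroup δ f) r
      = ∫⁻ z, ENNReal.ofReal (heatKernel δ z) * cum (fun x => ENNReal.ofReal (f x)) (r + z) := by
  have hinner : ∀ x : ℝ, heatSemigroup δ f x
      = ∫⁻ z, ENNReal.ofReal (heatKernel δ z) * ENNReal.ofReal (f (x + z)) := by
    intro x
    rw [heatSemigroup]
    rw [← lintegral_add_right_eq_self
      (fun y => ENNReal.ofReal (heatKernel δ (y - x)) * ENNReal.ofReal (f y)) x]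
    simp [add_comm]
  simp_rw [cum, hinner]
  rw [lintegral_lintegral_swap]
  · congr 1
    ext z
    rw [lintegral_const_mul _ (by measurability), cum_shift (fun x => ENNReal.ofReal (f x)) r z]
    rfl
  · apply Measurable.aemeasurable
    show Measurable ((fun p : ℝ × ℝ => ENNReal.ofReal (heatKernel δ p.2)) * fun p => ENNReal.ofReal (f (p.1 + p.2)))
    apply Measurable.mul
    · exact ((measurable_heatKernel δ).comp measurable_snd).ennreal_ofReal
    · exact (hf.comp (measurable_fst.add measurable_snd)).ennreal_ofReal


/-- The heat semigroup preserves the ordering `u ≼ v mod ℓ` of cumulative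
integrals: if `∫_{-∞}^r v ≤ ∫_{-∞}^r u + ℓ` for all `r`, the same holds after
applying `S_δ`. -/
theorem stmt_1 (u v : ℝ → ℝ) (hu_meas : Measurable u) (hv_meas : Measurable v)
    (hu_nonneg : ∀ x, 0 ≤ u x) (hv_nonneg : ∀ x, 0 ≤ v x)
    (hu_left : cum (fun x => ENNReal.ofReal (u x)) 0 < ⊤)
    (hv_left : cum (fun x => ENNReal.ofReal (v x)) 0 < ⊤)
    (ℓ : ℝ) (hℓ : 0 ≤ ℓ)
    (hle : ∀ r : ℝ, cum (fun x => ENNReal.ofReal (v x)) r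
      ≤ cum (fun x => ENNReal.ofReal (u x)) r + ENNReal.ofReal ℓ)
    (δ : ℝ) (hδ : 0 < δ) :
    ∀ r : ℝ, cum (heatSemigroup δ v) r ≤ cum (heatSemigroup δ u) r + ENNReal.ofReal ℓ := by
  intro r
  rw [cum_heatSemigroup δ hδ v hv_meas r, cum_heatSemigroup δ hδ u hu_meas r]
  calc ∫⁻ z, ENNReal.ofReal (heatKernel δ z) * cum (fun x => ENNReal.ofReal (v x)) (r + z)
      ≤ ∫⁻ z, (ENNReal.ofReal (heatKernel δ z) * cum (fun x => ENNReal.ofReal (u x)) (r + z)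
          + ENNReal.ofReal (heatKernel δ z) * ENNReal.ofReal ℓ) := by
        apply lintegral_mono
        intro z
        dsimp only
        rw [← mul_add]
        exact mul_le_mul_right (hle (r + z)) _
    _ = (∫⁻ z, ENNReal.ofReal (heatKernel δ z) * cum (fun x => ENNReal.ofReal (u x)) (r + z))
          + ∫⁻ z, ENNReal.ofReal (heatKernel δ z) * ENNReal.ofReal ℓ := by
        apply lintegral_add_right'
        exact ((measurable_heatKernel δ).ennreal_ofReal.mul_const _).aemeasurable
    _ = _ := by
        rw [lintegral_mul_const' _ _ (by simp), lintegral_heatKernel δ hδ, one_mul]
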